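/- Suppose the material is macro-homogeneous at scale r₀, and suppose C_{r₀} := Σ_{r : |r| > r₀} |X_r|/|X| is strictly positive. Define the random variable Ψ : Ω → ℝ by Ψ(ω) = (1/C_{r₀}) · Σ_{r : |r| ≤ r₀} (|X_r|/|X|) · (T_r(ω) − Φ(ω)²). Then E[Ψ] = Var[Φ]; that is, the TPC-based single-image predictor Ψ is an unbiased estimator of the variance of the phase fraction. -/

import Mathlib

open MeasureTheory Finset
open scoped Classical

lemma tpc_reindex_aux (X D : Finset (ℤ × ℤ)) (Xr : ℤ × ℤ → Finset (ℤ × ℤ))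
    (hXr : ∀ r, Xr r = X.filter (fun x => x + r ∈ X))
    (hD : D = (X ×ˢ X).image (fun p => p.1 - p.2))
    (f : ℤ × ℤ → ℤ × ℤ → ℝ) :
    ∑ p ∈ X ×ˢ X, f p.1 p.2 = ∑ r ∈ D, ∑ x ∈ Xr r, f (x + r) x := by
  rw [Finset.sum_sigma']
  refine Finset.sum_nbij' (fun p => ⟨p.1 - p.2, p.2⟩) (fun q => (q.2 + q.1, q.2))
    ?_ ?_ ?_ ?_ ?_
  · rintro ⟨a, b⟩ hp
    rw [Finset.mem_product] at hp
    rw [Finset.mem_sigma]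
    constructor
    · rw [hD]; exact Finset.mem_image.mpr ⟨(a, b), Finset.mem_product.mpr hp, rfl⟩
    · rw [hXr]
      refine Finset.mem_filter.mpr ⟨hp.2, ?_⟩
      have : b + (a - b) = a := by ring
      rw [this]; exact hp.1
  · rintro ⟨r, x⟩ hq
    rw [Finset.mem_sigma] at hq
    have hx := hq.2
    rw [hXr] at hx
    rw [Finset.mem_filter] at hx
    exact Finset.mem_product.mpr ⟨hx.2, hx.1⟩
  · rintro ⟨a, b⟩ _
    simp only
    have : b + (a - b) = a := by ring
    rw [this]
  · rintro ⟨r, x⟩ _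
    simp only
    congr 1
    ring
  · rintro ⟨a, b⟩ _
    simp only
    have : b + (a - b) = a := by ring
    rw [this]

lemma integrable_of_bdd {Ω : Type*} [MeasurableSpace Ω] (P : Measure Ω)
    [IsFiniteMeasure P] {f : Ω → ℝ} (hm : Measurable f) {M : ℝ}
    (hb : ∀ ω, |f ω| ≤ M) : Integrable f P :=
  ⟨hm.aestronglyMeasurable,
    HasFiniteIntegral.of_bounded (C := M) (ae_of_all _ (by simpa [Real.norm_eq_abs] using hb))⟩

theorem tpc_predictor_unbiased
    {Ω : Type*} [MeasurableSpace Ω] (P : Measure Ω) [IsProbabilityMeasure P]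
    (l₁ l₂ : ℕ) (hl₁ : 0 < l₁) (hl₂ : 0 < l₂)
    (X : Finset (ℤ × ℤ))
    (hX : X = (Finset.Ico (0 : ℤ) (l₁ : ℤ)) ×ˢ (Finset.Ico (0 : ℤ) (l₂ : ℤ)))
    (B : ℤ × ℤ → Ω → ℝ)
    (hBmeas : ∀ x, Measurable (B x))
    (hB01 : ∀ x ω, B x ω = 0 ∨ B x ω = 1)
    (Φ : Ω → ℝ)
    (hΦ : ∀ ω, Φ ω = (1 / (X.card : ℝ)) * ∑ x ∈ X, B x ω)
    (Xr : ℤ × ℤ → Finset (ℤ × ℤ))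
    (hXr : ∀ r, Xr r = X.filter (fun x => x + r ∈ X))
    (T : ℤ × ℤ → Ω → ℝ)
    (hT : ∀ r ω, T r ω = (1 / ((Xr r).card : ℝ)) * ∑ x ∈ Xr r, B x ω * B (x + r) ω)
    (D : Finset (ℤ × ℤ))
    (hD : D = (X ×ˢ X).image (fun p => p.1 - p.2))
    (r₀ : ℝ) (hr₀ : 0 < r₀)
    (hmacro : ∀ r ∈ D, r₀ < Real.sqrt ((r.1 : ℝ) ^ 2 + (r.2 : ℝ) ^ 2) →
      ∫ ω, T r ω ∂P = (∫ ω, Φ ω ∂P) ^ 2)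
    (C : ℝ)
    (hC : C = ∑ r ∈ D.filter (fun r => r₀ < Real.sqrt ((r.1 : ℝ) ^ 2 + (r.2 : ℝ) ^ 2)),
      ((Xr r).card : ℝ) / (X.card : ℝ))
    (hCpos : 0 < C)
    (Ψ : Ω → ℝ)
    (hΨ : ∀ ω, Ψ ω = (1 / C) *
      ∑ r ∈ D.filter (fun r => Real.sqrt ((r.1 : ℝ) ^ 2 + (r.2 : ℝ) ^ 2) ≤ r₀),
        (((Xr r).card : ℝ) / (X.card : ℝ)) * (T r ω - (Φ ω) ^ 2)) :
    ∫ ω, Ψ ω ∂P = ProbabilityTheory.variance Φ P := by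
  -- basic facts
  have hXne : X.Nonempty := by
    refine ⟨(0, 0), ?_⟩
    rw [hX, Finset.mem_product]
    constructor <;> simp [Finset.mem_Ico] <;> positivity
  have hNpos : (0 : ℝ) < (X.card : ℝ) := by
    exact_mod_cast Finset.card_pos.mpr hXne
  set N : ℝ := (X.card : ℝ) with hN
  -- bounds on B
  have hBb : ∀ x ω, 0 ≤ B x ω ∧ B x ω ≤ 1 := by
    intro x ω; rcases hB01 x ω with h | h <;> rw [h] <;> norm_num
  -- bound on the inner sums
  have hsumb : ∀ (r : ℤ × ℤ) (ω : Ω),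
      |∑ x ∈ Xr r, B x ω * B (x + r) ω| ≤ ((Xr r).card : ℝ) := by
    intro r ω
    calc |∑ x ∈ Xr r, B x ω * B (x + r) ω| ≤ ∑ x ∈ Xr r, |B x ω * B (x + r) ω| :=
          Finset.abs_sum_le_sum_abs _ _
      _ ≤ ∑ x ∈ Xr r, 1 := by
          refine Finset.sum_le_sum fun x _ => ?_
          rw [abs_mul, abs_of_nonneg (hBb x ω).1, abs_of_nonneg (hBb _ ω).1]
          exact mul_le_one₀ (hBb x ω).2 (hBb _ ω).1 (hBb _ ω).2
      _ = ((Xr r).card : ℝ) := by simp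
  -- bound on T
  have hTb : ∀ r ω, |T r ω| ≤ 1 := by
    intro r ω
    rw [hT]
    rcases Nat.eq_zero_or_pos (Xr r).card with h | h
    · simp [h]
    · have hc : (0 : ℝ) < ((Xr r).card : ℝ) := by exact_mod_cast h
      rw [abs_mul, abs_of_pos (by positivity : (0:ℝ) < 1 / ((Xr r).card : ℝ))]
      rw [div_mul_eq_mul_div, one_mul, div_le_one hc]
      exact hsumb r ω
  -- bound on Φ
  have hΦb : ∀ ω, |Φ ω| ≤ 1 := by
    intro ω
    rw [hΦ]
    rw [abs_mul, abs_of_pos (by positivity : (0:ℝ) < 1 / N)]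
    rw [div_mul_eq_mul_div, one_mul, div_le_one hNpos]
    calc |∑ x ∈ X, B x ω| ≤ ∑ x ∈ X, |B x ω| := Finset.abs_sum_le_sum_abs _ _
      _ ≤ ∑ x ∈ X, 1 := Finset.sum_le_sum fun x _ => by
          rw [abs_of_nonneg (hBb x ω).1]; exact (hBb x ω).2
      _ = N := by simp [hN]
  -- measurability
  have hΦfun : Φ = fun ω => (1 / N) * ∑ x ∈ X, B x ω := funext hΦ
  have hΦmeas : Measurable Φ := by
    rw [hΦfun]
    exact measurable_const.mul (Finset.measurable_sum _ fun x _ => hBmeas x)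
  have hTmeas : ∀ r, Measurable (T r) := by
    intro r
    have : T r = fun ω => (1 / ((Xr r).card : ℝ)) * ∑ x ∈ Xr r, B x ω * B (x + r) ω :=
      funext (hT r)
    rw [this]
    exact measurable_const.mul (Finset.measurable_sum _ fun x _ => (hBmeas x).mul (hBmeas _))
  -- integrability
  have hTint : ∀ r, Integrable (T r) P := fun r =>
    integrable_of_bdd P (hTmeas r) (hTb r)
  have hΦ2meas : Measurable (fun ω => Φ ω ^ 2) := hΦmeas.pow_const 2
  have hΦ2b : ∀ ω, |Φ ω ^ 2| ≤ 1 := by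
    intro ω
    rw [abs_pow]
    exact pow_le_one₀ (abs_nonneg _) (hΦb ω)
  have hΦ2int : Integrable (fun ω => Φ ω ^ 2) P := integrable_of_bdd P hΦ2meas hΦ2b
  -- Xr nonempty on D
  have hXrD : ∀ r ∈ D, 0 < (Xr r).card := by
    intro r hr
    rw [hD] at hr
    obtain ⟨p, hp, hpr⟩ := Finset.mem_image.mp hr
    rw [Finset.mem_product] at hp
    refine Finset.card_pos.mpr ⟨p.2, ?_⟩
    rw [hXr, Finset.mem_filter]
    refine ⟨hp.2, ?_⟩
    have : p.2 + r = p.1 := by rw [← hpr]; ring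
    rw [this]; exact hp.1
  -- pointwise identity: Φ² as weighted sum of TPCs
  have hkey : ∀ ω, Φ ω ^ 2 = ∑ r ∈ D, (((Xr r).card : ℝ) / N ^ 2) * T r ω := by
    intro ω
    have h1 : (∑ x ∈ X, B x ω) * (∑ x ∈ X, B x ω)
        = ∑ p ∈ X ×ˢ X, B p.1 ω * B p.2 ω := by
      rw [Finset.sum_mul_sum]
      rw [Finset.sum_product]
    have h2 := tpc_reindex_aux X D Xr hXr hD (fun a b => B a ω * B b ω)
    have h3 : ∀ r ∈ D, ∑ x ∈ Xr r, B (x + r) ω * B x ω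
        = ((Xr r).card : ℝ) * T r ω := by
      intro r hr
      have hc : ((Xr r).card : ℝ) ≠ 0 := by
        exact_mod_cast (hXrD r hr).ne'
      rw [hT, ← mul_assoc, mul_one_div, div_self hc, one_mul]
      exact Finset.sum_congr rfl fun x _ => mul_comm _ _
    calc Φ ω ^ 2 = (1 / N) ^ 2 * ((∑ x ∈ X, B x ω) * (∑ x ∈ X, B x ω)) := by
          rw [hΦ]; ring
      _ = (1 / N) ^ 2 * ∑ r ∈ D, ((Xr r).card : ℝ) * T r ω := by
          rw [h1, h2, Finset.sum_congr rfl h3]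
      _ = ∑ r ∈ D, (((Xr r).card : ℝ) / N ^ 2) * T r ω := by
          rw [Finset.mul_sum]
          exact Finset.sum_congr rfl fun r _ => by ring
  -- notation
  set μ := ∫ ω, Φ ω ∂P with hμ
  set Q := ∫ ω, Φ ω ^ 2 ∂P with hQdef
  set near := D.filter (fun r => Real.sqrt ((r.1 : ℝ) ^ 2 + (r.2 : ℝ) ^ 2) ≤ r₀) with hnear
  set far := D.filter (fun r => r₀ < Real.sqrt ((r.1 : ℝ) ^ 2 + (r.2 : ℝ) ^ 2)) with hfar
  -- splitting sums over D
  have hsplit : ∀ f : ℤ × ℤ → ℝ, ∑ r ∈ D, f r = ∑ r ∈ near, f r + ∑ r ∈ far, f r := by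
    intro f
    rw [← Finset.sum_filter_add_sum_filter_not D
      (fun r => Real.sqrt ((r.1 : ℝ) ^ 2 + (r.2 : ℝ) ^ 2) ≤ r₀) f]
    congr 2
    rw [hfar]
    apply Finset.filter_congr
    intro r _
    simp [not_le]
  -- total weight identity
  have hcard : ∑ r ∈ D, ((Xr r).card : ℝ) = N ^ 2 := by
    have h := tpc_reindex_aux X D Xr hXr hD (fun _ _ => (1 : ℝ))
    simp only [Finset.sum_const, nsmul_eq_mul, mul_one, Finset.card_product] at h
    rw [← h]; push_cast; ring
  -- expected value of Φ²
  have hQ1 : Q = ∑ r ∈ D, (((Xr r).card : ℝ) / N ^ 2) * ∫ ω, T r ω ∂P := by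
    rw [hQdef]
    calc ∫ ω, Φ ω ^ 2 ∂P = ∫ ω, ∑ r ∈ D, (((Xr r).card : ℝ) / N ^ 2) * T r ω ∂P := by
          exact integral_congr_ae (ae_of_all _ hkey)
      _ = ∑ r ∈ D, ∫ ω, (((Xr r).card : ℝ) / N ^ 2) * T r ω ∂P :=
          integral_finset_sum D fun r _ => (hTint r).const_mul _
      _ = ∑ r ∈ D, (((Xr r).card : ℝ) / N ^ 2) * ∫ ω, T r ω ∂P :=
          Finset.sum_congr rfl fun r _ => integral_const_mul _ _
  -- expected value of Ψ
  set S : ℝ := ∑ r ∈ near, (((Xr r).card : ℝ) / N) * ∫ ω, T r ω ∂P with hS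
  set K : ℝ := ∑ r ∈ near, ((Xr r).card : ℝ) / N with hK
  have hIΨ : ∫ ω, Ψ ω ∂P = (1 / C) * (S - K * Q) := by
    calc ∫ ω, Ψ ω ∂P
        = ∫ ω, (1 / C) * ∑ r ∈ near, (((Xr r).card : ℝ) / N) * (T r ω - Φ ω ^ 2) ∂P :=
          integral_congr_ae (ae_of_all _ hΨ)
      _ = (1 / C) * ∫ ω, ∑ r ∈ near, (((Xr r).card : ℝ) / N) * (T r ω - Φ ω ^ 2) ∂P :=
          integral_const_mul _ _
      _ = (1 / C) * ∑ r ∈ near, ∫ ω, (((Xr r).card : ℝ) / N) * (T r ω - Φ ω ^ 2) ∂P := by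
          congr 1
          exact integral_finset_sum _ fun r _ => ((hTint r).sub hΦ2int).const_mul _
      _ = (1 / C) * ∑ r ∈ near, (((Xr r).card : ℝ) / N) * ((∫ ω, T r ω ∂P) - Q) := by
          congr 1
          exact Finset.sum_congr rfl fun r _ => by
            rw [integral_const_mul, integral_sub (hTint r) hΦ2int]
      _ = (1 / C) * (S - K * Q) := by
          congr 1
          rw [hS, hK, Finset.sum_mul, ← Finset.sum_sub_distrib]
          exact Finset.sum_congr rfl fun r _ => by ring
  -- weights: K + C = N
  have hKC : K + C = N := by
    have h1 : ∑ r ∈ D, ((Xr r).card : ℝ) / N = N := by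
      rw [← Finset.sum_div, hcard]
      field_simp
    rw [hsplit (fun r => ((Xr r).card : ℝ) / N)] at h1
    rw [hK, hC]
    exact h1
  -- Q in terms of S, C, μ
  have hQN : Q * N = S + C * μ ^ 2 := by
    have h2 : ∀ r ∈ far, ∫ ω, T r ω ∂P = μ ^ 2 := by
      intro r hr
      rw [hfar, Finset.mem_filter] at hr
      exact hmacro r hr.1 hr.2
    rw [hQ1, hsplit (fun r => (((Xr r).card : ℝ) / N ^ 2) * ∫ ω, T r ω ∂P)]
    have h3 : ∑ r ∈ far, (((Xr r).card : ℝ) / N ^ 2) * ∫ ω, T r ω ∂P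
        = (C / N) * μ ^ 2 := by
      rw [hC, Finset.sum_div, Finset.sum_mul]
      exact Finset.sum_congr rfl fun r hr => by rw [h2 r hr]; ring
    have h4 : ∑ r ∈ near, (((Xr r).card : ℝ) / N ^ 2) * ∫ ω, T r ω ∂P = S / N := by
      rw [hS, Finset.sum_div]
      exact Finset.sum_congr rfl fun r _ => by ring
    rw [h3, h4]
    field_simp
  -- variance
  have hmem : MemLp Φ 2 P :=
    MemLp.of_bound hΦmeas.aestronglyMeasurable 1
      (ae_of_all _ (by simpa [Real.norm_eq_abs] using hΦb))
  rw [ProbabilityTheory.variance_eq_sub hmem]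
  have hpow : (∫ ω, (Φ ^ 2) ω ∂P) = Q := by
    rw [hQdef]; congr 1
  simp only [Pi.pow_apply] at hpow ⊢
  rw [hIΨ]
  have hKeq : K = N - C := by linarith
  rw [hKeq]
  have hμeq : (∫ ω, Φ ω ∂P) = μ := rfl
  rw [hμeq]
  have hQeq : (∫ ω, Φ ω ^ 2 ∂P) = Q := rfl
  rw [hQeq]
  field_simp
  linear_combination -hQN
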